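/- Let ν : E⁻³ → E⁻², ψ : E⁻² → E⁻¹, φ : E⁻¹ → E⁰ be B-linear maps between finite-rank free B-modules with φ∘ψ = 0 and ψ∘ν = 0. Denote reduction modulo π by a bar and reduction modulo π^{m−1} by a tilde. Assume ker(ψ̄) = im(ν̄) (i.e. the cohomology of the reduced complex at degree −2 vanishes). If the B-module ker(φ)/im(ψ) has a nonzero submodule of dimension d, where d < dim A, then the B-module ker(φ̃)/im(ψ̃) also has a nonzero submodule of dimension at most d. -/

import Mathlib

open scoped TensorProduct

/-- The ring `B := A ⊗_k R/(π^m)`. -/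
noncomputable abbrev BRing (k A R : Type*) [Field k] [CommRing A] [Algebra k A]
    [CommRing R] [Algebra k R] (π : R) (m : ℕ) : Type _ :=
  A ⊗[k] (R ⧸ Ideal.span {π ^ m})

/-- The image of `π` in `B = A ⊗_k R/(π^m)`. -/
noncomputable def piB (k A R : Type*) [Field k] [CommRing A] [Algebra k A]
    [CommRing R] [Algebra k R] (π : R) (m : ℕ) : BRing k A R π m :=
  (1 : A) ⊗ₜ[k] (Ideal.Quotient.mk (Ideal.span {π ^ m}) π)

/-- The dimension of a module `M` over a commutative ring `S`: the Krull dimension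
of `S/ann_S(M)`. -/
noncomputable def moduleDim (S : Type*) [CommRing S] (M : Type*) [AddCommGroup M]
    [Module S M] : WithBot (WithTop ℕ) :=
  ringKrullDim (S ⧸ Module.annihilator S M)

lemma smul_top_le_comap_smul_top {S M N : Type*} [CommRing S] [AddCommGroup M] [Module S M]
    [AddCommGroup N] [Module S N] (I : Ideal S) (f : M →ₗ[S] N) :
    I • (⊤ : Submodule S M) ≤ Submodule.comap f (I • ⊤) := by
  rw [← Submodule.map_le_iff_le_comap, Submodule.map_smul'']
  exact Submodule.smul_mono le_rfl le_top

/-- The reduction of a linear map `f : M → N` modulo an ideal `I`: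
the induced map `M/IM → N/IN`. -/
noncomputable def reduceMap {S : Type*} [CommRing S] (I : Ideal S) {M N : Type*}
    [AddCommGroup M] [Module S M] [AddCommGroup N] [Module S N] (f : M →ₗ[S] N) :
    (M ⧸ (I • (⊤ : Submodule S M))) →ₗ[S] (N ⧸ (I • (⊤ : Submodule S N))) :=
  Submodule.mapQ _ _ f (smul_top_le_comap_smul_top I f)


/-- The homology `ker φ / im ψ` of a pair of composable linear maps (defined without
assuming `im ψ ⊆ ker φ`, by intersecting `im ψ` with `ker φ`). -/
noncomputable abbrev homologyAt {S M N P : Type*} [CommRing S]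
    [AddCommGroup M] [Module S M] [AddCommGroup N] [Module S N]
    [AddCommGroup P] [Module S P] (ψ : M →ₗ[S] N) (φ : N →ₗ[S] P) : Type _ :=
  LinearMap.ker φ ⧸ Submodule.comap (LinearMap.ker φ).subtype (LinearMap.range ψ)

/-! ### Auxiliary lemmas -/

lemma mem_span_smul_top_iff {S M : Type*} [CommRing S] [AddCommGroup M] [Module S M]
    (c : S) (x : M) : x ∈ Ideal.span {c} • (⊤ : Submodule S M) ↔ ∃ e, x = c • e := by
  constructor
  · intro hx
    refine Submodule.smul_induction_on hx ?_ ?_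
    · rintro r hr n -
      obtain ⟨a, rfl⟩ := Ideal.mem_span_singleton.mp hr
      exact ⟨a • n, by rw [mul_smul]⟩
    · rintro x y ⟨e, rfl⟩ ⟨f, rfl⟩
      exact ⟨e + f, by rw [smul_add]⟩
  · rintro ⟨e, rfl⟩
    exact Submodule.smul_mem_smul (Ideal.mem_span_singleton_self c) trivial

lemma free_smul_torsion {B : Type*} [CommRing B] (p q : B)
    (hB : ∀ b : B, p * b = 0 → ∃ c, b = q * c)
    {E : Type*} [AddCommGroup E] [Module B E] [Module.Free B E] [Module.Finite B E]
    (x : E) (hx : p • x = 0) : ∃ u : E, x = q • u := by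
  let b := Module.Free.chooseBasis B E
  have h1 : ∀ i, p * b.repr x i = 0 := by
    intro i
    have := congrArg (fun z => b.repr z i) hx
    simpa using this
  choose c hc using fun i => hB _ (h1 i)
  refine ⟨∑ i, c i • b i, ?_⟩
  rw [Finset.smul_sum]
  conv_lhs => rw [← b.sum_repr x]
  refine Finset.sum_congr rfl fun i _ => ?_
  rw [hc i, smul_smul, mul_comm]

section AuxB
variable (k A R : Type*) [Field k] [CommRing A] [Algebra k A]
    [CommRing R] [IsDomain R] [Algebra k R] (π : R) (m : ℕ)

omit [IsDomain R] in
lemma piB_pow (j : ℕ) : piB k A R π m ^ j =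
    (1 : A) ⊗ₜ[k] (Ideal.Quotient.mk (Ideal.span {π ^ m}) (π ^ j)) := by
  rw [piB, Algebra.TensorProduct.tmul_pow, one_pow, map_pow]

omit [IsDomain R] in
lemma piB_pow_self : piB k A R π m ^ m = 0 := by
  rw [piB_pow]
  have : (Ideal.Quotient.mk (Ideal.span {π ^ m})) (π ^ m) = 0 := by
    rw [Ideal.Quotient.eq_zero_iff_mem]
    exact Ideal.mem_span_singleton_self _
  rw [this, TensorProduct.tmul_zero]

omit [IsDomain R] in
lemma lTensor_mulLeft_eq (c : R ⧸ Ideal.span {π ^ m}) (b : BRing k A R π m) :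
    (LinearMap.mulLeft k c).lTensor A b = ((1 : A) ⊗ₜ[k] c) * b := by
  induction b using TensorProduct.induction_on with
  | zero => simp
  | tmul a q => simp [Algebra.TensorProduct.tmul_mul_tmul]
  | add x y hx hy => simp [hx, hy, mul_add]

lemma piB_mul_eq_zero_imp (hπ0 : π ≠ 0) (n : ℕ) (b : BRing k A R π (n + 2))
    (hb : piB k A R π (n + 2) * b = 0) :
    ∃ c, b = piB k A R π (n + 2) ^ (n + 1) * c := by
  set mk := Ideal.Quotient.mk (Ideal.span {π ^ (n + 2)}) with hmk
  have exactQ : Function.Exact (LinearMap.mulLeft k (mk (π ^ (n + 1))))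
      (LinearMap.mulLeft k (mk π)) := by
    intro y
    obtain ⟨r, rfl⟩ := Ideal.Quotient.mk_surjective y
    constructor
    · intro h
      have h2 : π ^ (n + 2) ∣ π * r := by
        rw [← Ideal.mem_span_singleton]
        rw [LinearMap.mulLeft_apply, ← map_mul, Ideal.Quotient.eq_zero_iff_mem] at h
        exact h
      have h3 : π ^ (n + 1) ∣ r := by
        have h4 : π * π ^ (n + 1) ∣ π * r := by rw [← pow_succ']; exact h2
        exact (mul_dvd_mul_iff_left hπ0).mp h4
      obtain ⟨s, rfl⟩ := h3
      exact ⟨mk s, by rw [LinearMap.mulLeft_apply, ← map_mul]⟩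
    · rintro ⟨z, hz⟩
      obtain ⟨s, rfl⟩ := Ideal.Quotient.mk_surjective z
      rw [LinearMap.mulLeft_apply, ← map_mul] at hz
      rw [← hz, LinearMap.mulLeft_apply, ← map_mul, ← mul_assoc, ← pow_succ',
        Ideal.Quotient.eq_zero_iff_mem]
      exact Ideal.mem_span_singleton.mpr ⟨s, rfl⟩
  have exactB := Module.Flat.lTensor_exact A exactQ
  have hb' : (LinearMap.mulLeft k (mk π)).lTensor A b = 0 := by
    rw [lTensor_mulLeft_eq]; exact hb
  obtain ⟨c, hc⟩ := (exactB b).mp hb'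
  refine ⟨c, ?_⟩
  rw [piB_pow, ← hc, lTensor_mulLeft_eq]

end AuxB

/-! ### The multiplication-by-`p` map on homology -/

section Mu
variable {B : Type*} [CommRing B] (p : B) (t : ℕ)
variable {E2 E1 E0 : Type*} [AddCommGroup E2] [Module B E2]
  [AddCommGroup E1] [Module B E1] [AddCommGroup E0] [Module B E0]
variable (ψ : E2 →ₗ[B] E1) (φ : E1 →ₗ[B] E0)

/-- The map `E1/p^t E1 → E1` given by multiplication by `p` (assuming `p·p^t = 0`). -/
noncomputable def pmulMap (hpt : p * p ^ t = 0) :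
    (E1 ⧸ (Ideal.span {p ^ t} • (⊤ : Submodule B E1))) →ₗ[B] E1 :=
  Submodule.liftQ _ (LinearMap.lsmul B E1 p) (by
    intro x hx
    obtain ⟨e, rfl⟩ := (mem_span_smul_top_iff _ _).mp hx
    simp only [LinearMap.mem_ker, LinearMap.lsmul_apply, smul_smul, hpt, zero_smul])

@[simp] lemma pmulMap_mk (hpt : p * p ^ t = 0) (x : E1) :
    pmulMap p t hpt (Submodule.Quotient.mk x) = p • x := rfl

/-- The restriction of `pmulMap` to a map `ker φ̃ → ker φ`. -/
noncomputable def muKer (hpt : p * p ^ t = 0) :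
    LinearMap.ker (reduceMap (Ideal.span {p ^ t}) φ) →ₗ[B] LinearMap.ker φ :=
  LinearMap.codRestrict _ ((pmulMap p t hpt).comp (Submodule.subtype _)) (by
    rintro ⟨xq, hxq⟩
    obtain ⟨x, rfl⟩ := Submodule.Quotient.mk_surjective _ xq
    rw [LinearMap.mem_ker, reduceMap, Submodule.mapQ_apply,
      Submodule.Quotient.mk_eq_zero] at hxq
    obtain ⟨w, hw⟩ := (mem_span_smul_top_iff _ _).mp hxq
    simp only [LinearMap.mem_ker, LinearMap.comp_apply, Submodule.subtype_apply, pmulMap_mk]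
    rw [map_smul, hw, smul_smul, hpt, zero_smul])

@[simp] lemma muKer_coe (hpt : p * p ^ t = 0)
    (g : LinearMap.ker (reduceMap (Ideal.span {p ^ t}) φ)) :
    ((muKer p t φ hpt g : LinearMap.ker φ) : E1) =
      pmulMap p t hpt (g : E1 ⧸ (Ideal.span {p ^ t} • (⊤ : Submodule B E1))) := rfl

/-- The multiplication-by-`p` map on homology,
`ker φ̃ / im ψ̃ → ker φ / im ψ`. -/
noncomputable def muHom (hpt : p * p ^ t = 0) :
    homologyAt (reduceMap (Ideal.span {p ^ t}) ψ) (reduceMap (Ideal.span {p ^ t}) φ) →ₗ[B]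
      homologyAt ψ φ :=
  Submodule.mapQ _ _ (muKer p t φ hpt) (by
    rintro ⟨xq, hxq⟩ hg
    rw [Submodule.mem_comap, Submodule.subtype_apply] at hg
    obtain ⟨yq, hyq⟩ := hg
    obtain ⟨y, rfl⟩ := Submodule.Quotient.mk_surjective _ yq
    have hyq' : reduceMap (Ideal.span {p ^ t}) ψ (Submodule.Quotient.mk y) = xq := hyq
    rw [Submodule.mem_comap, Submodule.mem_comap, Submodule.subtype_apply]
    refine ⟨p • y, ?_⟩
    show ψ (p • y) = ((muKer p t φ hpt ⟨xq, hxq⟩ : LinearMap.ker φ) : E1)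
    have h2 : xq = Submodule.Quotient.mk (ψ y) := by
      rw [← hyq', reduceMap, Submodule.mapQ_apply]
    show ψ (p • y) = pmulMap p t hpt xq
    rw [h2, pmulMap_mk, map_smul])

lemma muHom_mk (hpt : p * p ^ t = 0)
    (g : LinearMap.ker (reduceMap (Ideal.span {p ^ t}) φ)) :
    muHom p t ψ φ hpt (Submodule.Quotient.mk g) =
      Submodule.Quotient.mk (muKer p t φ hpt g) :=
  Submodule.mapQ_apply _ _ _ _

end Mu

/-! ### The main argument, over an abstract ring -/

set_option maxHeartbeats 1000000 in
lemma homology_reduction_aux {B : Type*} [CommRing B] (p : B) (n : ℕ)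
    (hpm : p ^ (n + 2) = 0)
    (hBt : ∀ b : B, p * b = 0 → ∃ c, b = p ^ (n + 1) * c)
    {E3 E2 E1 E0 : Type*}
    [AddCommGroup E3] [Module B E3] [AddCommGroup E2] [Module B E2]
    [AddCommGroup E1] [Module B E1] [AddCommGroup E0] [Module B E0]
    [Module.Free B E1] [Module.Finite B E1] [Module.Free B E0] [Module.Finite B E0]
    (ν : E3 →ₗ[B] E2) (ψ : E2 →ₗ[B] E1) (φ : E1 →ₗ[B] E0)
    (hφψ : φ.comp ψ = 0) (hψν : ψ.comp ν = 0)
    (hexact : LinearMap.ker (reduceMap (Ideal.span {p}) ψ) =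
      LinearMap.range (reduceMap (Ideal.span {p}) ν))
    (d : WithBot (WithTop ℕ))
    (hsub : ∃ N : Submodule B (homologyAt ψ φ), N ≠ ⊥ ∧ moduleDim B N = d) :
    ∃ N' : Submodule B
        (homologyAt (reduceMap (Ideal.span {p ^ (n + 1)}) ψ)
          (reduceMap (Ideal.span {p ^ (n + 1)}) φ)),
      N' ≠ ⊥ ∧ moduleDim B N' ≤ d := by
  classical
  have hpt : p * p ^ (n + 1) = 0 := by rw [← pow_succ']; exact hpm
  have hKE1 : ∀ x : E1, p • x = 0 → ∃ u, x = p ^ (n + 1) • u := fun x hx =>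
    free_smul_torsion p (p ^ (n + 1)) hBt x hx
  have hKE0 : ∀ x : E0, p • x = 0 → ∃ u, x = p ^ (n + 1) • u := fun x hx =>
    free_smul_torsion p (p ^ (n + 1)) hBt x hx
  -- Key lemma: if p•x ∈ im ψ then x ∈ im ψ + p^{n+1} E1
  have keyL : ∀ x : E1, p • x ∈ LinearMap.range ψ →
      ∃ y u, x = ψ y + p ^ (n + 1) • u := by
    intro x hx
    obtain ⟨y, hy⟩ := hx
    have hybar : (Submodule.Quotient.mk y :
        E2 ⧸ (Ideal.span {p} • (⊤ : Submodule B E2))) ∈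
        LinearMap.ker (reduceMap (Ideal.span {p}) ψ) := by
      rw [LinearMap.mem_ker, reduceMap, Submodule.mapQ_apply, Submodule.Quotient.mk_eq_zero,
        hy]
      exact Submodule.smul_mem_smul (Ideal.mem_span_singleton_self p) trivial
    rw [hexact] at hybar
    obtain ⟨zq, hz⟩ := hybar
    obtain ⟨z, rfl⟩ := Submodule.Quotient.mk_surjective _ zq
    rw [reduceMap, Submodule.mapQ_apply] at hz
    have h4 : y - ν z ∈ Ideal.span {p} • (⊤ : Submodule B E2) :=
      (Submodule.Quotient.eq _).mp hz.symm
    obtain ⟨y2, hy2⟩ := (mem_span_smul_top_iff _ _).mp h4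
    have hνz : ψ (ν z) = 0 := by
      have h := DFunLike.congr_fun hψν z
      simpa using h
    have h5 : p • (x - ψ y2) = 0 := by
      have hyeq : y = p • y2 + ν z := by
        rw [← hy2]; abel
      have h6 : ψ y = p • ψ y2 := by
        rw [hyeq, map_add, map_smul, hνz, add_zero]
      rw [smul_sub, ← hy, h6, sub_self]
    obtain ⟨u, hu⟩ := hKE1 _ h5
    exact ⟨y2, u, by rw [← hu]; abel⟩
  -- Injectivity of the multiplication-by-p map on homology
  have hinj : ∀ g : LinearMap.ker (reduceMap (Ideal.span {p ^ (n + 1)}) φ),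
      muKer p (n + 1) φ hpt g ∈
        Submodule.comap (LinearMap.ker φ).subtype (LinearMap.range ψ) →
      g ∈ Submodule.comap (LinearMap.ker (reduceMap (Ideal.span {p ^ (n + 1)}) φ)).subtype
        (LinearMap.range (reduceMap (Ideal.span {p ^ (n + 1)}) ψ)) := by
    rintro ⟨xq, hxq⟩ hg
    obtain ⟨x, rfl⟩ := Submodule.Quotient.mk_surjective _ xq
    have hg' : p • x ∈ LinearMap.range ψ := hg
    obtain ⟨y, u, hdec⟩ := keyL _ hg'
    rw [Submodule.mem_comap, Submodule.subtype_apply]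
    refine ⟨Submodule.Quotient.mk y, ?_⟩
    show reduceMap (Ideal.span {p ^ (n + 1)}) ψ (Submodule.Quotient.mk y)
      = Submodule.Quotient.mk x
    rw [reduceMap, Submodule.mapQ_apply, Submodule.Quotient.eq]
    exact (mem_span_smul_top_iff _ _).mpr ⟨-u, by rw [hdec, smul_neg]; abel⟩
  have hμinj : Function.Injective (muHom p (n + 1) ψ φ hpt) := by
    have hker : LinearMap.ker (muHom p (n + 1) ψ φ hpt) = ⊥ := by
      rw [eq_bot_iff]
      rintro h hh
      obtain ⟨g, rfl⟩ := Submodule.Quotient.mk_surjective _ h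
      rw [LinearMap.mem_ker, muHom_mk, Submodule.Quotient.mk_eq_zero] at hh
      rw [Submodule.mem_bot, Submodule.Quotient.mk_eq_zero]
      exact hinj g hh
    exact LinearMap.ker_eq_bot.mp hker
  -- Find a nonzero p-torsion element of N
  obtain ⟨N, hNbot, hNdim⟩ := hsub
  obtain ⟨n0, hn0N, hn00⟩ := Submodule.exists_mem_ne_zero_of_ne_bot hNbot
  have hfin : ∃ j, p ^ j • n0 = 0 := ⟨n + 2, by rw [hpm]; exact zero_smul B n0⟩
  have ht0spec := Nat.find_spec hfin
  have ht0pos : Nat.find hfin ≠ 0 := by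
    intro h
    rw [h, pow_zero, one_smul] at ht0spec
    exact hn00 ht0spec
  obtain ⟨s, hs⟩ : ∃ s, Nat.find hfin = s + 1 := ⟨Nat.find hfin - 1, by omega⟩
  have hlt : p ^ s • n0 ≠ 0 := Nat.find_min hfin (by omega)
  have hnnN : p ^ s • n0 ∈ N := N.smul_mem _ hn0N
  have hpnn : p • p ^ s • n0 = 0 := by
    have h11 : (p * p ^ s) • n0 = 0 := by rw [← pow_succ', ← hs]; exact ht0spec
    rw [mul_smul] at h11; exact h11
  -- Lift it through μ
  obtain ⟨xK, hxK⟩ := Submodule.Quotient.mk_surjective _ (p ^ s • n0)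
  have hpx : p • (xK : E1) ∈ LinearMap.range ψ := by
    have h8 : (Submodule.Quotient.mk (p • xK) : homologyAt ψ φ) = 0 := by
      rw [Submodule.Quotient.mk_smul, hxK, hpnn]
    rw [Submodule.Quotient.mk_eq_zero] at h8
    exact h8
  obtain ⟨y, u, hdec⟩ := keyL _ hpx
  have h7 : p • (p ^ n • u) = (xK : E1) - ψ y := by
    rw [smul_smul, ← pow_succ', hdec]; abel
  have hφpw : φ (p • (p ^ n • u)) = 0 := by
    have hxk0 : φ (xK : E1) = 0 := LinearMap.mem_ker.mp xK.2
    have hφψy : φ (ψ y) = 0 := by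
      have h := DFunLike.congr_fun hφψ y
      simpa using h
    rw [h7, map_sub, hxk0, hφψy, sub_self]
  have h12 : p • φ (p ^ n • u) = φ (p • (p ^ n • u)) := (map_smul φ p (p ^ n • u)).symm
  obtain ⟨v, hv⟩ := hKE0 (φ (p ^ n • u)) (h12.trans hφpw)
  have hkerw : (Submodule.Quotient.mk (p ^ n • u) :
      E1 ⧸ (Ideal.span {p ^ (n + 1)} • (⊤ : Submodule B E1))) ∈
      LinearMap.ker (reduceMap (Ideal.span {p ^ (n + 1)}) φ) := by
    rw [LinearMap.mem_ker, reduceMap, Submodule.mapQ_apply, Submodule.Quotient.mk_eq_zero]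
    exact (mem_span_smul_top_iff _ _).mpr ⟨v, hv⟩
  set g0 : LinearMap.ker (reduceMap (Ideal.span {p ^ (n + 1)}) φ) :=
    ⟨Submodule.Quotient.mk (p ^ n • u), hkerw⟩ with hg0
  have hμg0 : muHom p (n + 1) ψ φ hpt (Submodule.Quotient.mk g0) = p ^ s • n0 := by
    rw [muHom_mk, ← hxK, Submodule.Quotient.eq]
    show ((muKer p (n + 1) φ hpt g0 - xK : LinearMap.ker φ) : E1) ∈ LinearMap.range ψ
    have h9 : ((muKer p (n + 1) φ hpt g0 - xK : LinearMap.ker φ) : E1) = -(ψ y) := by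
      have h10 : ((muKer p (n + 1) φ hpt g0 : LinearMap.ker φ) : E1) = p • (p ^ n • u) := rfl
      rw [AddSubgroupClass.coe_sub, h10, h7]
      abel
    rw [h9]
    exact ⟨-y, map_neg ψ y⟩
  -- Conclusion: pull back N along μ
  refine ⟨Submodule.comap (muHom p (n + 1) ψ φ hpt) N, ?_, ?_⟩
  · rw [Submodule.ne_bot_iff]
    refine ⟨Submodule.Quotient.mk g0, ?_, ?_⟩
    · rw [Submodule.mem_comap, hμg0]; exact hnnN
    · intro h0
      apply hlt
      rw [← hμg0, h0, map_zero]
  · rw [← hNdim]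
    have hann : Module.annihilator B ↥N ≤
        Module.annihilator B ↥(Submodule.comap (muHom p (n + 1) ψ φ hpt) N) := by
      intro b hb
      rw [Module.mem_annihilator] at hb ⊢
      rintro ⟨g, hg⟩
      have h1 : muHom p (n + 1) ψ φ hpt (b • g) = 0 := by
        rw [map_smul]
        have h2 := hb ⟨muHom p (n + 1) ψ φ hpt g, hg⟩
        exact congrArg Subtype.val h2
      have h2 : b • g = 0 := hμinj (by rw [h1, map_zero])
      exact Subtype.ext h2
    show ringKrullDim _ ≤ ringKrullDim _
    refine ringKrullDim_le_of_surjective (Ideal.Quotient.factor hann) ?_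
    intro yq
    obtain ⟨r, rfl⟩ := Ideal.Quotient.mk_surjective yq
    exact ⟨Ideal.Quotient.mk _ r, Ideal.Quotient.factor_mk _ _⟩


/-! ### Main theorem -/

set_option maxHeartbeats 1000000 in
theorem homology_reduction_submodule
    (k : Type*) [Field k] [IsAlgClosed k] [CharZero k]
    (R : Type*) [CommRing R] [IsDomain R] [IsDiscreteValuationRing R] [Algebra k R]
    (π : R) (hπ : Irreducible π)
    (hres : Function.Bijective ((IsLocalRing.residue R).comp (algebraMap k R)))
    (A : Type*) [CommRing A] [IsDomain A] [Algebra k A] [Algebra.FiniteType k A]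
    (m : ℕ) (hm : 1 < m)
    (E3 E2 E1 E0 : Type*)
    [AddCommGroup E3] [Module (BRing k A R π m) E3]
    [AddCommGroup E2] [Module (BRing k A R π m) E2]
    [AddCommGroup E1] [Module (BRing k A R π m) E1]
    [AddCommGroup E0] [Module (BRing k A R π m) E0]
    [Module.Free (BRing k A R π m) E3] [Module.Finite (BRing k A R π m) E3]
    [Module.Free (BRing k A R π m) E2] [Module.Finite (BRing k A R π m) E2]
    [Module.Free (BRing k A R π m) E1] [Module.Finite (BRing k A R π m) E1]
    [Module.Free (BRing k A R π m) E0] [Module.Finite (BRing k A R π m) E0]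
    (ν : E3 →ₗ[BRing k A R π m] E2) (ψ : E2 →ₗ[BRing k A R π m] E1)
    (φ : E1 →ₗ[BRing k A R π m] E0)
    (hφψ : φ.comp ψ = 0) (hψν : ψ.comp ν = 0)
    (hexact : LinearMap.ker (reduceMap (Ideal.span {piB k A R π m}) ψ) =
      LinearMap.range (reduceMap (Ideal.span {piB k A R π m}) ν))
    (d : WithBot (WithTop ℕ)) (hd : d < ringKrullDim A)
    (hsub : ∃ N : Submodule (BRing k A R π m) (homologyAt ψ φ),
      N ≠ ⊥ ∧ moduleDim (BRing k A R π m) N = d) :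
    ∃ N' : Submodule (BRing k A R π m)
        (homologyAt (reduceMap (Ideal.span {piB k A R π m ^ (m - 1)}) ψ)
          (reduceMap (Ideal.span {piB k A R π m ^ (m - 1)}) φ)),
      N' ≠ ⊥ ∧ moduleDim (BRing k A R π m) N' ≤ d := by
  obtain ⟨n, rfl⟩ : ∃ n, m = n + 2 := ⟨m - 2, by omega⟩
  rw [show n + 2 - 1 = n + 1 from rfl]
  exact homology_reduction_aux (piB k A R π (n + 2)) n (piB_pow_self k A R π (n + 2))
    (piB_mul_eq_zero_imp k A R π hπ.ne_zero n) ν ψ φ hφψ hψν hexact d hsub
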